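/- Let N ≥ 1, k ≥ 0 and s > N be integers and let x > 0 be a real number. Then the (k+1)×(k+1) Hankel matrix with (i,j)-entry (i+j)! · s!/(s−N+i+j)! · x^{i+j}, for 0 ≤ i,j ≤ k, is positive definite. -/

import Mathlib

open MeasureTheory Polynomial Finset

private lemma fact_prod_nat (n m : ℕ) :
    n.factorial * ∏ j ∈ Finset.range (m + 1), (n + 1 + j) = (n + m + 1).factorial := by
  induction m with
  | zero =>
      simp [Nat.factorial_succ, Nat.mul_comm]
  | succ m ih =>
      rw [Finset.prod_range_succ, ← mul_assoc, ih,
        show n + (m + 1) + 1 = (n + m + 1) + 1 from by omega, Nat.factorial_succ, Nat.mul_comm]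
      congr 1
      omega

private lemma fact_prod_aux (n m : ℕ) :
    (n.factorial : ℂ) * ∏ j ∈ Finset.range (m + 1), ((n : ℂ) + 1 + j)
      = ((n + m + 1).factorial : ℂ) := by
  have hp : (∏ j ∈ Finset.range (m + 1), ((n : ℂ) + 1 + j))
      = ((∏ j ∈ Finset.range (m + 1), (n + 1 + j) : ℕ) : ℂ) := by
    push_cast
    rfl
  rw [hp, ← Nat.cast_mul, fact_prod_nat]

private lemma beta_nat_integral (n m : ℕ) :
    ∫ t in (0:ℝ)..1, t ^ n * (1 - t) ^ m
      = (n.factorial : ℝ) * m.factorial / (n + m + 1).factorial := by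
  have hre : 0 < Complex.re ((n : ℂ) + 1) := by
    simp only [Complex.add_re, Complex.natCast_re, Complex.one_re]
    positivity
  have h1 := Complex.betaIntegral_eval_nat_add_one_right hre m
  have h2 : Complex.betaIntegral ((n : ℂ) + 1) ((m : ℂ) + 1)
      = ((∫ t in (0:ℝ)..1, t ^ n * (1 - t) ^ m : ℝ) : ℂ) := by
    rw [Complex.betaIntegral, ← intervalIntegral.integral_ofReal]
    refine intervalIntegral.integral_congr fun t _ => ?_
    push_cast
    rw [add_sub_cancel_right, add_sub_cancel_right, Complex.cpow_natCast, Complex.cpow_natCast]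
  rw [h2] at h1
  have h3 := fact_prod_aux n m
  have hprod_ne : (∏ j ∈ Finset.range (m + 1), ((n : ℂ) + 1 + j)) ≠ 0 := by
    refine Finset.prod_ne_zero_iff.mpr fun j _ => ?_
    have : ((n : ℂ) + 1 + j) = ((n + 1 + j : ℕ) : ℂ) := by push_cast; ring
    rw [this]
    simp only [ne_eq, Nat.cast_eq_zero]
    omega
  have hfact_ne : ((n + m + 1).factorial : ℂ) ≠ 0 :=
    Nat.cast_ne_zero.mpr (Nat.factorial_ne_zero _)
  have key : ((∫ t in (0:ℝ)..1, t ^ n * (1 - t) ^ m : ℝ) : ℂ)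
      = (((n.factorial : ℝ) * m.factorial / (n + m + 1).factorial : ℝ) : ℂ) := by
    rw [h1]
    push_cast
    rw [div_eq_div_iff hprod_ne hfact_ne, ← h3]
    ring
  exact_mod_cast key
set_option maxHeartbeats 1000000 in
/-- for integers `N ≥ 1`, `k ≥ 0`, `s > N` and real `x > 0`, the Hankel
matrix with entries `(i+j)! · s!/(s−N+i+j)! · x^{i+j}` is positive definite. -/
theorem hankel_scaled_factorial_posDef
    (N k s : ℕ) (hN : 1 ≤ N) (hs : N < s) (x : ℝ) (hx : 0 < x) :
    (Matrix.of (fun i j : Fin (k + 1) =>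
        (Nat.factorial ((i : ℕ) + (j : ℕ)) : ℝ) *
          ((Nat.factorial s : ℝ) / (Nat.factorial (s - N + (i : ℕ) + (j : ℕ)) : ℝ)) *
          x ^ ((i : ℕ) + (j : ℕ)))).PosDef := by
  have hm1' : 1 ≤ s - N := by omega
  revert hm1'
  generalize (s - N) = m
  intro hm1
  obtain ⟨C, hC, hCpos⟩ : ∃ C : ℝ, C = (s.factorial : ℝ) / ((m - 1).factorial : ℝ) ∧ 0 < C :=
    ⟨_, rfl, by positivity⟩
  have entry : ∀ n : ℕ,
      (n.factorial : ℝ) * ((s.factorial : ℝ) / (((m + n).factorial : ℝ))) * x ^ n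
        = C * ∫ t in (0:ℝ)..1, (x * t) ^ n * (1 - t) ^ (m - 1) := by
    intro n
    have hb : (∫ t in (0:ℝ)..1, (x * t) ^ n * (1 - t) ^ (m - 1))
        = x ^ n * ((n.factorial : ℝ) * (((m - 1).factorial : ℝ)) / (((m + n).factorial : ℝ))) := by
      have hpt : ∀ t : ℝ, (x * t) ^ n * (1 - t) ^ (m - 1)
          = x ^ n * (t ^ n * (1 - t) ^ (m - 1)) := fun t => by rw [mul_pow]; ring
      simp_rw [hpt]
      rw [intervalIntegral.integral_const_mul, beta_nat_integral,
        show n + (m - 1) + 1 = m + n from by omega]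
    rw [hb, hC]
    have h1 : ((m + n).factorial : ℝ) ≠ 0 := Nat.cast_ne_zero.mpr (Nat.factorial_ne_zero _)
    have h2 : (((m - 1)).factorial : ℝ) ≠ 0 := Nat.cast_ne_zero.mpr (Nat.factorial_ne_zero _)
    field_simp
  refine Matrix.posDef_iff_dotProduct_mulVec.mpr ⟨?_, ?_⟩
  · show _ = _
    ext i j
    simp only [Matrix.conjTranspose_apply, Matrix.of_apply, star_trivial]
    rw [Nat.add_comm (j : ℕ) (i : ℕ),
      show m + (j : ℕ) + (i : ℕ) = m + (i : ℕ) + (j : ℕ) from by omega]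
  · intro p hp
    obtain ⟨f, hf⟩ : ∃ f : Fin (k + 1) → ℝ → ℝ,
        f = fun i t => p i * (x * t) ^ (i : ℕ) := ⟨_, rfl⟩
    have contf : ∀ i : Fin (k + 1), Continuous (f i) := fun i => by
      rw [hf]; fun_prop
    have contw : Continuous (fun t : ℝ => (1 - t) ^ (m - 1)) := by fun_prop
    have hintij : ∀ i j : Fin (k + 1), IntervalIntegrable
        (fun t => f i t * f j t * (1 - t) ^ (m - 1)) MeasureTheory.volume 0 1 :=
      fun i j => (((contf i).mul (contf j)).mul contw).intervalIntegrable 0 1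
    have term : ∀ i j : Fin (k + 1),
        p i * ((C * ∫ t in (0:ℝ)..1, (x * t) ^ ((i : ℕ) + (j : ℕ)) * (1 - t) ^ (m - 1)) * p j)
          = C * ∫ t in (0:ℝ)..1, f i t * f j t * (1 - t) ^ (m - 1) := by
      intro i j
      have hpt : ∀ t : ℝ, f i t * f j t * (1 - t) ^ (m - 1)
          = (p i * p j) * ((x * t) ^ ((i : ℕ) + (j : ℕ)) * (1 - t) ^ (m - 1)) := fun t => by
        simp only [hf]; rw [pow_add]; ring
      simp_rw [hpt]
      rw [intervalIntegral.integral_const_mul]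
      ring
    have pointwise : ∀ t : ℝ, (∑ i : Fin (k + 1), f i t) ^ 2 * (1 - t) ^ (m - 1)
        = ∑ i : Fin (k + 1), ∑ j : Fin (k + 1), f i t * f j t * (1 - t) ^ (m - 1) := by
      intro t
      rw [sq, Finset.sum_mul_sum, Finset.sum_mul]
      exact Finset.sum_congr rfl fun i _ => by rw [Finset.sum_mul]
    have expand : dotProduct (star p)
        (Matrix.mulVec (Matrix.of (fun i j : Fin (k + 1) =>
          (Nat.factorial ((i : ℕ) + (j : ℕ)) : ℝ) *
            ((Nat.factorial s : ℝ) / (Nat.factorial (m + (i : ℕ) + (j : ℕ)) : ℝ)) *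
            x ^ ((i : ℕ) + (j : ℕ)))) p)
        = C * ∫ t in (0:ℝ)..1, (∑ i : Fin (k + 1), f i t) ^ 2 * (1 - t) ^ (m - 1) := by
      simp only [dotProduct, Matrix.mulVec, Matrix.of_apply, Pi.star_apply, star_trivial]
      trans (∑ i : Fin (k + 1), ∑ j : Fin (k + 1),
              C * ∫ t in (0:ℝ)..1, f i t * f j t * (1 - t) ^ (m - 1))
      · refine Finset.sum_congr rfl fun i _ => ?_
        rw [Finset.mul_sum]
        refine Finset.sum_congr rfl fun j _ => ?_
        rw [show m + (i : ℕ) + (j : ℕ) = m + ((i : ℕ) + (j : ℕ)) from by omega,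
          entry ((i : ℕ) + (j : ℕ))]
        exact term i j
      · symm
        have hint2 : ∀ i : Fin (k + 1), IntervalIntegrable
            (fun t => ∑ j : Fin (k + 1), f i t * f j t * (1 - t) ^ (m - 1))
            MeasureTheory.volume 0 1 := fun i =>
          (continuous_finset_sum Finset.univ fun j _ =>
            ((contf i).mul (contf j)).mul contw).intervalIntegrable 0 1
        have swap : (∫ t in (0:ℝ)..1, ∑ i : Fin (k + 1), ∑ j : Fin (k + 1),
              f i t * f j t * (1 - t) ^ (m - 1))
            = ∑ i : Fin (k + 1), ∑ j : Fin (k + 1),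
              ∫ t in (0:ℝ)..1, f i t * f j t * (1 - t) ^ (m - 1) :=
          (intervalIntegral.integral_finset_sum
            (f := fun (i : Fin (k + 1)) (t : ℝ) => ∑ j : Fin (k + 1),
              f i t * f j t * (1 - t) ^ (m - 1))
            (fun i _ => hint2 i)).trans
          (Finset.sum_congr rfl fun i _ =>
            intervalIntegral.integral_finset_sum fun j _ => hintij i j)
        simp_rw [pointwise]
        rw [swap, Finset.mul_sum]
        refine Finset.sum_congr rfl fun i _ => ?_
        rw [Finset.mul_sum]
    rw [expand]
    refine mul_pos hCpos ?_
    obtain ⟨P, hP⟩ : ∃ P : Polynomial ℝ,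
        P = ∑ i : Fin (k + 1), Polynomial.C (p i * x ^ (i : ℕ)) * Polynomial.X ^ (i : ℕ) :=
      ⟨_, rfl⟩
    have hPeval : ∀ t : ℝ, P.eval t = ∑ i : Fin (k + 1), f i t := by
      intro t
      rw [hP, Polynomial.eval_finset_sum]
      refine Finset.sum_congr rfl fun i _ => ?_
      simp only [Polynomial.eval_mul, Polynomial.eval_C, Polynomial.eval_pow,
        Polynomial.eval_X, hf]
      rw [mul_pow]
      ring
    have hPne : P ≠ 0 := by
      obtain ⟨i0, hi0⟩ := Function.ne_iff.mp hp
      simp only [Pi.zero_apply] at hi0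
      intro h0
      have hc : P.coeff (i0 : ℕ) = p i0 * x ^ (i0 : ℕ) := by
        rw [hP, Polynomial.finset_sum_coeff]
        rw [Finset.sum_eq_single i0]
        · rw [Polynomial.coeff_C_mul, Polynomial.coeff_X_pow, if_pos rfl, mul_one]
        · intro j _ hj
          rw [Polynomial.coeff_C_mul, Polynomial.coeff_X_pow,
            if_neg (fun hji => hj (Fin.ext hji).symm), mul_zero]
        · intro hmem
          exact absurd (Finset.mem_univ i0) hmem
      rw [h0, Polynomial.coeff_zero] at hc
      exact hi0 (by
        rcases mul_eq_zero.mp hc.symm with h | h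
        · exact h
        · exact absurd h (pow_ne_zero _ (ne_of_gt hx)))
    have hfin : Set.Finite {t : ℝ | P.IsRoot t} := Polynomial.finite_setOf_isRoot hPne
    have hnonneg : 0 ≤ᵐ[MeasureTheory.volume.restrict (Set.uIoc (0:ℝ) 1)]
        fun t => (∑ i : Fin (k + 1), f i t) ^ 2 * (1 - t) ^ (m - 1) := by
      rw [Set.uIoc_of_le (by norm_num : (0:ℝ) ≤ 1)]
      refine MeasureTheory.ae_restrict_of_forall_mem measurableSet_Ioc fun t ht => ?_
      have h1t : (0:ℝ) ≤ 1 - t := by linarith [ht.2]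
      positivity
    have hintg : IntervalIntegrable
        (fun t => (∑ i : Fin (k + 1), f i t) ^ 2 * (1 - t) ^ (m - 1))
        MeasureTheory.volume 0 1 := by
      apply Continuous.intervalIntegrable
      exact (((continuous_finset_sum _ fun i _ => contf i).pow 2).mul contw)
    rw [intervalIntegral.integral_pos_iff_support_of_nonneg_ae' hnonneg hintg]
    refine ⟨zero_lt_one, ?_⟩
    have hsub : Set.Ioo (0:ℝ) 1 \ {t : ℝ | P.IsRoot t} ⊆
        (Function.support fun t => (∑ i : Fin (k + 1), f i t) ^ 2 * (1 - t) ^ (m - 1))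
          ∩ Set.Ioc 0 1 := by
      rintro t ⟨ht, hroot⟩
      refine ⟨?_, ht.1, ht.2.le⟩
      simp only [Function.mem_support]
      have h1 : (∑ i : Fin (k + 1), f i t) ≠ 0 := by
        rw [← hPeval]
        exact fun h => hroot h
      have h2 : (1 - t) ^ (m - 1) ≠ 0 := pow_ne_zero _ (by linarith [ht.2])
      exact mul_ne_zero (pow_ne_zero _ h1) h2
    calc (0 : ENNReal) < MeasureTheory.volume (Set.Ioo (0:ℝ) 1 \ {t : ℝ | P.IsRoot t}) := by
          rw [MeasureTheory.measure_diff_null (hfin.measure_zero _)]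
          simp [Real.volume_Ioo]
      _ ≤ _ := MeasureTheory.measure_mono hsub
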